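/- A submodule N of a left R-module M is δ-small in M if and only if N ⊆ δ(M) and N is PSD in M. -/

import Mathlib

open Submodule Function

/-- A submodule `N` of `M` is PSD in `M` if whenever `N + X = M`, there is a
projective direct summand `S` of `M` with `S ≤ N` and `M = S ⊕ X`. -/
def IsPSD (R : Type*) [Ring R] {M : Type*} [AddCommGroup M] [Module R M]
    (N : Submodule R M) : Prop :=
  ∀ X : Submodule R M, N ⊔ X = ⊤ →
    ∃ S : Submodule R M, S ≤ N ∧ Module.Projective R ↥S ∧ IsCompl S X

/-- `N` is small in `M`: `N + L = M` implies `L = M`. -/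
def IsSmallSub (R : Type*) [Ring R] {M : Type*} [AddCommGroup M] [Module R M]
    (N : Submodule R M) : Prop :=
  ∀ L : Submodule R M, N ⊔ L = ⊤ → L = ⊤

/-- The (Jacobson) radical of a module: intersection of all maximal submodules. -/
def radM (R M : Type*) [Ring R] [AddCommGroup M] [Module R M] : Submodule R M :=
  sInf {m : Submodule R M | IsCoatom m}

/-- `M` is supplemented: every submodule `X` has a submodule `Y` with `X + Y = M`
and `X ∩ Y` small in `Y`. -/
def IsSupplemented (R M : Type*) [Ring R] [AddCommGroup M] [Module R M] : Prop :=
  ∀ X : Submodule R M, ∃ Y : Submodule R M, X ⊔ Y = ⊤ ∧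
    IsSmallSub R (Submodule.comap Y.subtype X)

/-- `M` is lifting: every submodule `N` admits a decomposition `M = A ⊕ B` with
`A ≤ N` and `N ∩ B` small in `B`. -/
def IsLifting (R M : Type*) [Ring R] [AddCommGroup M] [Module R M] : Prop :=
  ∀ N : Submodule R M, ∃ A B : Submodule R M, IsCompl A B ∧ A ≤ N ∧
    IsSmallSub R (Submodule.comap B.subtype N)

/-- `Y` is an `I`-supplement of `X` in `M`: `X + Y = M`, `X ∩ Y ⊆ IY`, and
`X ∩ Y` is PSD in `Y`. -/
def IsISupplementOf {R : Type*} [Ring R] {M : Type*} [AddCommGroup M] [Module R M]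
    (I : Ideal R) (Y X : Submodule R M) : Prop :=
  X ⊔ Y = ⊤ ∧ X ⊓ Y ≤ I • Y ∧ IsPSD R (Submodule.comap Y.subtype X)

/-- `M` is `I`-supplemented: every submodule has an `I`-supplement in `M`. -/
def IsISupplemented {R : Type*} [Ring R] (I : Ideal R) (M : Type*)
    [AddCommGroup M] [Module R M] : Prop :=
  ∀ X : Submodule R M, ∃ Y : Submodule R M, IsISupplementOf I Y X

/-- A left ideal is essential if it intersects every nonzero left ideal nontrivially. -/
def IsEssentialIdeal (R : Type*) [Ring R] (J : Ideal R) : Prop :=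
  ∀ K : Ideal R, J ⊓ K = ⊥ → K = ⊥

/-- A module is singular if every element has essential annihilator. -/
def IsSingularMod (R : Type*) [Ring R] (A : Type*) [AddCommGroup A] [Module R A] : Prop :=
  ∀ a : A, IsEssentialIdeal R (LinearMap.ker (LinearMap.toSpanSingleton R A a))

/-- `δ(M)`: the intersection of all submodules `K` with `M/K` singular simple. -/
def deltaM (R M : Type*) [Ring R] [AddCommGroup M] [Module R M] : Submodule R M :=
  sInf {K : Submodule R M | IsSimpleModule R (M ⧸ K) ∧ IsSingularMod R (M ⧸ K)}

/-- `N` is δ-small in `M`: whenever `N + X = M` with `M/X` singular, `X = M`. -/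
def IsDeltaSmall (R : Type*) [Ring R] {M : Type*} [AddCommGroup M] [Module R M]
    (N : Submodule R M) : Prop :=
  ∀ X : Submodule R M, N ⊔ X = ⊤ → IsSingularMod R (M ⧸ X) → X = ⊤

section AuxLemmas

variable {R : Type*} [Ring R]

theorem essIdeal_mono {J₁ J₂ : Ideal R} (h : J₁ ≤ J₂) (hJ : IsEssentialIdeal R J₁) :
    IsEssentialIdeal R J₂ := by
  intro K hK
  refine hJ K (eq_bot_iff.2 ?_)
  rw [← hK]
  exact inf_le_inf_right K h

theorem singular_of_equiv {A B : Type*} [AddCommGroup A] [Module R A] [AddCommGroup B]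
    [Module R B] (e : A ≃ₗ[R] B) (h : IsSingularMod R A) : IsSingularMod R B := by
  intro b
  have hkey : LinearMap.ker (LinearMap.toSpanSingleton R B b) =
      LinearMap.ker (LinearMap.toSpanSingleton R A (e.symm b)) := by
    ext r
    simp only [LinearMap.mem_ker, LinearMap.toSpanSingleton_apply]
    rw [← e.symm.map_eq_zero_iff, map_smul]
  rw [hkey]
  exact h (e.symm b)

theorem singular_quot {A : Type*} [AddCommGroup A] [Module R A] (h : IsSingularMod R A)
    (W : Submodule R A) : IsSingularMod R (A ⧸ W) := by
  intro a
  obtain ⟨x, rfl⟩ := Submodule.Quotient.mk_surjective W a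
  refine essIdeal_mono ?_ (h x)
  intro r hr
  simp only [LinearMap.mem_ker, LinearMap.toSpanSingleton_apply] at hr ⊢
  rw [← Submodule.Quotient.mk_smul, hr, Submodule.Quotient.mk_zero]

theorem colon_essential {M : Type*} [AddCommGroup M] [Module R M] {N E : Submodule R M}
    (hE : ∀ W : Submodule R M, W ≤ N → W ⊓ E = ⊥ → W = ⊥)
    {n : M} (hn : n ∈ N) :
    IsEssentialIdeal R (E.comap (LinearMap.toSpanSingleton R M n)) := by
  intro K hK
  set W := Submodule.map (LinearMap.toSpanSingleton R M n) K with hW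
  have hWN : W ≤ N := by
    rintro _ ⟨r, _, rfl⟩
    exact N.smul_mem r hn
  have hWE : W ⊓ E = ⊥ := by
    rw [eq_bot_iff]
    rintro x ⟨hx1, hx2⟩
    obtain ⟨r, hr, rfl⟩ := hx1
    have hrm : r ∈ E.comap (LinearMap.toSpanSingleton R M n) ⊓ K := ⟨hx2, hr⟩
    rw [hK] at hrm
    simp only [Submodule.mem_bot] at hrm
    subst hrm
    simp
  have hWbot := hE W hWN hWE
  rw [eq_bot_iff]
  intro r hr
  have hrn : LinearMap.toSpanSingleton R M n r ∈ W := Submodule.mem_map_of_mem hr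
  rw [hWbot, Submodule.mem_bot] at hrn
  have : r ∈ E.comap (LinearMap.toSpanSingleton R M n) ⊓ K := by
    refine ⟨?_, hr⟩
    show LinearMap.toSpanSingleton R M n r ∈ E
    rw [hrn]
    exact E.zero_mem
  rw [hK] at this
  exact this

theorem singular_quotient_of_essential {M : Type*} [AddCommGroup M] [Module R M]
    {N E Q : Submodule R M} (hEQ : E ≤ Q)
    (hE : ∀ W : Submodule R M, W ≤ N → W ⊓ E = ⊥ → W = ⊥)
    (hNQ : N ⊔ Q = ⊤) : IsSingularMod R (M ⧸ Q) := by
  intro a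
  obtain ⟨m, rfl⟩ := Submodule.Quotient.mk_surjective Q a
  have hm : m ∈ N ⊔ Q := hNQ ▸ Submodule.mem_top
  obtain ⟨n, hn, q, hq, rfl⟩ := Submodule.mem_sup.1 hm
  refine essIdeal_mono ?_ (colon_essential hE hn)
  intro r hr
  simp only [Submodule.mem_comap, LinearMap.toSpanSingleton_apply] at hr
  simp only [LinearMap.mem_ker, LinearMap.toSpanSingleton_apply]
  rw [← Submodule.Quotient.mk_smul, Submodule.Quotient.mk_eq_zero, smul_add]
  exact Q.add_mem (hEQ hr) (Q.smul_mem r hq)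

theorem exists_max_disjoint {M : Type*} [AddCommGroup M] [Module R M] (N X : Submodule R M) :
    ∃ Y : Submodule R M, Y ≤ N ∧ Y ⊓ X = ⊥ ∧
      ∀ A : Submodule R M, A ≤ N → A ⊓ X = ⊥ → Y ≤ A → A = Y := by
  set s : Set (Submodule R M) := {A | A ≤ N ∧ A ⊓ X = ⊥} with hs
  have hbot : (⊥ : Submodule R M) ∈ s := ⟨bot_le, by rw [bot_inf_eq]⟩
  have hchainub : ∀ c ⊆ s, IsChain (· ≤ ·) c → ∀ y ∈ c, ∃ ub ∈ s, ∀ z ∈ c, z ≤ ub := by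
    intro c hcs hchain y hy
    refine ⟨sSup c, ⟨?_, ?_⟩, fun z hz => le_sSup hz⟩
    · exact sSup_le fun A hA => (hcs hA).1
    · rw [eq_bot_iff]
      rintro x ⟨hx1, hx2⟩
      have := (Submodule.mem_sSup_of_directed ⟨y, hy⟩ (hchain.directedOn)).1 hx1
      obtain ⟨A, hAc, hxA⟩ := this
      have : x ∈ A ⊓ X := ⟨hxA, hx2⟩
      rw [(hcs hAc).2] at this
      exact this
  obtain ⟨Y, -, hY, hmax⟩ := zorn_le_nonempty₀ s hchainub ⊥ hbot
  exact ⟨Y, hY.1, hY.2, fun A hA1 hA2 hYA => le_antisymm (hmax ⟨hA1, hA2⟩ hYA) hYA⟩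

end AuxLemmas

section AuxLemmas2

variable {R : Type*} [Ring R]

theorem quot_equiv_of_compl {M : Type*} [AddCommGroup M] [Module R M]
    {S X : Submodule R M} (hdis : S ⊓ X = ⊥) (W : Submodule R ↥S) (hsup : S ⊔ X = ⊤) :
    Nonempty ((M ⧸ (W.map S.subtype ⊔ X)) ≃ₗ[R] (↥S ⧸ W)) := by
  set K := W.map S.subtype ⊔ X with hK
  have hSK : S ⊔ K = ⊤ := by
    rw [eq_top_iff, ← hsup]
    exact sup_le_sup_left le_sup_right S
  set φ : ↥S →ₗ[R] M ⧸ K := K.mkQ.comp S.subtype with hφ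
  have hker : LinearMap.ker φ = W := by
    ext t
    simp only [hφ, LinearMap.mem_ker, LinearMap.comp_apply, Submodule.subtype_apply,
      Submodule.mkQ_apply, Submodule.Quotient.mk_eq_zero]
    constructor
    · intro ht
      obtain ⟨w, hw, x, hx, hsum⟩ := Submodule.mem_sup.1 ht
      obtain ⟨w0, hw0, rfl⟩ := hw
      simp only [Submodule.subtype_apply] at hsum
      have hxS : x ∈ S := by
        have : x = (t : M) - (w0 : M) := by rw [← hsum]; abel
        rw [this]
        exact S.sub_mem t.2 w0.2
      have hx0 : x = 0 := by
        have : x ∈ S ⊓ X := ⟨hxS, hx⟩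
        rwa [hdis, Submodule.mem_bot] at this
      have : (t : M) = (w0 : M) := by rw [← hsum, hx0, add_zero]
      rwa [show t = w0 from Subtype.ext this]
    · intro ht
      exact Submodule.mem_sup_left (Submodule.mem_map_of_mem ht)
  have hsurj : Function.Surjective φ := by
    intro z
    obtain ⟨m, rfl⟩ := Submodule.Quotient.mk_surjective K z
    have hm : m ∈ S ⊔ K := hSK ▸ Submodule.mem_top
    obtain ⟨a, ha, b, hb, rfl⟩ := Submodule.mem_sup.1 hm
    refine ⟨⟨a, ha⟩, ?_⟩
    simp only [hφ, LinearMap.comp_apply, Submodule.subtype_apply, Submodule.mkQ_apply]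
    rw [Submodule.Quotient.eq]
    simpa using K.neg_mem hb
  exact ⟨((Submodule.quotEquivOfEq W (LinearMap.ker φ) hker.symm).trans
    (φ.quotKerEquivOfSurjective hsurj)).symm⟩

theorem eq_top_of_le_sup {M : Type*} [AddCommGroup M] [Module R M]
    {S X : Submodule R M} (hdis : S ⊓ X = ⊥) (W : Submodule R ↥S)
    (hK : S ≤ W.map S.subtype ⊔ X) : W = ⊤ := by
  rw [eq_top_iff]
  rintro t -
  obtain ⟨w, hw, x, hx, hsum⟩ := Submodule.mem_sup.1 (hK t.2)
  obtain ⟨w0, hw0, rfl⟩ := hw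
  simp only [Submodule.subtype_apply] at hsum
  have hxS : x ∈ S := by
    have : x = (t : M) - (w0 : M) := by rw [← hsum]; abel
    rw [this]; exact S.sub_mem t.2 w0.2
  have hx0 : x = 0 := by
    have : x ∈ S ⊓ X := ⟨hxS, hx⟩
    rwa [hdis, Submodule.mem_bot] at this
  have : (t : M) = (w0 : M) := by rw [← hsum, hx0, add_zero]
  rwa [show t = w0 from Subtype.ext this]

theorem simple_nonsingular_projective {T : Type*} [AddCommGroup T] [Module R T]
    [IsSimpleModule R T] (h : ¬ IsSingularMod R T) : Module.Projective R T := by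
  rw [IsSingularMod] at h
  push_neg at h
  obtain ⟨a, ha⟩ := h
  rw [IsEssentialIdeal] at ha
  push_neg at ha
  obtain ⟨K, hK, hKne⟩ := ha
  set L := LinearMap.ker (LinearMap.toSpanSingleton R T a) with hL
  have ha0 : a ≠ 0 := by
    rintro rfl
    apply hKne
    have hLtop : L = ⊤ := by
      rw [hL, eq_top_iff]; intro r _
      simp [LinearMap.mem_ker, LinearMap.toSpanSingleton_apply]
    rw [hLtop, top_inf_eq] at hK
    exact hK
  have hLco : IsCoatom L := Ideal.isMaximal_def.1 (IsSimpleModule.ker_toSpanSingleton_isMaximal R ha0)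
  have hKL : ¬ K ≤ L := by
    intro hle
    apply hKne
    rw [eq_bot_iff, ← hK]
    exact le_inf hle le_rfl
  have hsup : L ⊔ K = ⊤ := hLco.2 _ (lt_of_le_of_ne le_sup_left
    (fun hcon => hKL (hcon ▸ le_sup_right)))
  have hcompl : IsCompl L K := ⟨disjoint_iff.2 hK, codisjoint_iff.2 hsup⟩
  haveI hKproj : Module.Projective R ↥K := by
    refine Module.Projective.of_split K.subtype
      (Submodule.projectionOnto K L hcompl.symm) ?_
    ext x
    simp
  have e1 : (R ⧸ L) ≃ₗ[R] ↥K := Submodule.quotientEquivOfIsCompl L K hcompl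
  have e2 : (R ⧸ L) ≃ₗ[R] T :=
    LinearMap.quotKerEquivOfSurjective _ (IsSimpleModule.toSpanSingleton_surjective R ha0)
  exact Module.Projective.of_equiv (e1.symm.trans e2)

end AuxLemmas2

section AuxLemmas3

variable {R : Type*} [Ring R]

theorem projective_of_no_singular_quotient {Y : Type*} [AddCommGroup Y] [Module R Y]
    (h : ∀ E : Submodule R Y, IsSingularMod R (Y ⧸ E) → E = ⊤) :
    Module.Projective R Y := by
  classical
  -- every "essential" submodule is ⊤
  have hess : ∀ E : Submodule R Y, (∀ W : Submodule R Y, W ⊓ E = ⊥ → W = ⊥) → E = ⊤ := by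
    intro E hE
    exact h E (singular_quotient_of_essential (N := ⊤) (le_refl E)
      (fun W _ hW => hE W hW) (by rw [top_sup_eq]))
  -- complemented lattice
  haveI hcompl : ComplementedLattice (Submodule R Y) := by
    constructor
    intro E
    obtain ⟨C, -, hdis, hmax⟩ := exists_max_disjoint (⊤ : Submodule R Y) E
    refine ⟨C, disjoint_iff.2 (by rw [inf_comm]; exact hdis), codisjoint_iff.2 ?_⟩
    apply hess
    intro W hW
    have hdis2 : (C ⊔ W) ⊓ E = ⊥ := by
      rw [eq_bot_iff]
      rintro v ⟨hv1, hv2⟩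
      obtain ⟨c, hc, w, hw, rfl⟩ := Submodule.mem_sup.1 hv1
      have hwE : w ∈ W ⊓ (E ⊔ C) := by
        refine ⟨hw, ?_⟩
        have : w = (c + w) + (-c) := by abel
        rw [this]
        exact Submodule.add_mem _ (Submodule.mem_sup_left hv2)
          (Submodule.mem_sup_right (Submodule.neg_mem _ hc))
      rw [hW, Submodule.mem_bot] at hwE
      subst hwE
      rw [add_zero]
      have : c ∈ C ⊓ E := ⟨hc, by rwa [add_zero] at hv2⟩
      rwa [hdis, Submodule.mem_bot] at this
    have hCW := hmax (C ⊔ W) le_top hdis2 le_sup_left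
    have hWC : W ≤ C := le_trans le_sup_right hCW.le
    rw [eq_bot_iff, ← hW]
    exact le_inf le_rfl (le_trans hWC le_sup_right)
  -- semisimple decomposition into atoms
  have htop : sSup {a : Submodule R Y | IsAtom a} = ⊤ := sSup_atoms_eq_top
  obtain ⟨s, hind, hstop, hatoms⟩ := exists_sSupIndep_of_sSup_atoms_eq_top htop
  have hiind : iSupIndep ((↑) : s → Submodule R Y) := (sSupIndep_iff s).1 hind
  have hisup : ⨆ (a : s), (a : Submodule R Y) = ⊤ := by
    rw [← sSup_eq_iSup']
    exact hstop
  have hinternal : DirectSum.IsInternal (fun (a : s) => (a : Submodule R Y)) :=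
    DirectSum.isInternal_submodule_of_iSupIndep_of_iSup_eq_top hiind hisup
  -- each atom is projective
  haveI : ∀ a : s, Module.Projective R ↥(a : Submodule R Y) := by
    intro a
    haveI hsimp : IsSimpleModule R ↥(a : Submodule R Y) :=
      isSimpleModule_iff_isAtom.2 (hatoms a.2)
    apply simple_nonsingular_projective
    intro hsing
    obtain ⟨C, hC⟩ := exists_isCompl (a : Submodule R Y)
    have e : (Y ⧸ C) ≃ₗ[R] ↥(a : Submodule R Y) :=
      Submodule.quotientEquivOfIsCompl _ _ hC.symm
    have hCtop : C = ⊤ := h C (singular_of_equiv e.symm hsing)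
    have : (a : Submodule R Y) = ⊥ := by
      have := hC.disjoint
      rw [hCtop] at this
      simpa using this.eq_bot
    exact (hatoms a.2).1 this
  -- conclude projectivity
  haveI : Module.Projective R (DirectSum s (fun (a : s) => ↥(a : Submodule R Y))) := by
    unfold DirectSum
    infer_instance
  exact Module.Projective.of_equiv (LinearEquiv.ofBijective
    (DirectSum.coeLinearMap (fun (a : s) => (a : Submodule R Y))) hinternal)

end AuxLemmas3

section AuxLemmas4

variable {R : Type*} [Ring R]

theorem radR_mul_mem {a : R} (ha : a ∈ radM R R) (b : R) : a * b ∈ radM R R := by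
  rw [radM, Submodule.mem_sInf] at ha ⊢
  intro m hm
  by_cases hb : b ∈ m
  · exact m.smul_mem a hb
  · haveI hsimple : IsSimpleModule R (R ⧸ m) := isSimpleModule_iff_isCoatom.2 hm
    set f := LinearMap.toSpanSingleton R (R ⧸ m) (Submodule.Quotient.mk b) with hf
    have hb0 : (Submodule.Quotient.mk b : R ⧸ m) ≠ 0 := by
      rwa [ne_eq, Submodule.Quotient.mk_eq_zero]
    have hfs : Function.Surjective f := IsSimpleModule.toSpanSingleton_surjective R hb0
    have hker : IsCoatom (LinearMap.ker f) := LinearMap.isCoatom_ker_of_surjective hfs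
    have haf : a ∈ LinearMap.ker f := ha _ hker
    rw [LinearMap.mem_ker, hf, LinearMap.toSpanSingleton_apply, ← Submodule.Quotient.mk_smul,
      Submodule.Quotient.mk_eq_zero] at haf
    exact haf

theorem radR_one_sub_unit {a : R} (ha : a ∈ radM R R) : IsUnit (1 - a) := by
  have h1 : ∀ b ∈ radM R R, ∃ u : R, u * (1 - b) = 1 := by
    intro b hb
    by_contra hc
    push_neg at hc
    have hne : Ideal.span {1 - b} ≠ ⊤ := by
      intro ht
      rw [Ideal.eq_top_iff_one] at ht
      obtain ⟨u, hu⟩ := Submodule.mem_span_singleton.1 ht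
      exact hc u (by rwa [smul_eq_mul] at hu)
    obtain ⟨m, hm, hle⟩ := Ideal.exists_le_maximal _ hne
    have hbm : b ∈ m := by
      rw [radM, Submodule.mem_sInf] at hb
      exact hb m (Ideal.isMaximal_def.1 hm)
    have h1b : 1 - b ∈ m := hle (Ideal.subset_span rfl)
    have : (1 : R) ∈ m := by
      have := m.add_mem h1b hbm
      rwa [sub_add_cancel] at this
    exact hm.ne_top (Ideal.eq_top_of_isUnit_mem m this isUnit_one)
  obtain ⟨u, hu⟩ := h1 a ha
  have hua : -(u * a) ∈ radM R R := neg_mem ((radM R R).smul_mem u ha)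
  obtain ⟨v, hv⟩ := h1 _ hua
  have h2 : u - u * a = 1 := by rw [← hu, mul_sub, mul_one]
  have hu' : u = 1 + u * a := sub_eq_iff_eq_add.1 h2
  have hvu : v * u = 1 := by
    rw [hu', ← sub_neg_eq_add]
    exact hv
  have hveq : v = 1 - a := by
    calc v = v * (u * (1 - a)) := by rw [hu, mul_one]
    _ = (v * u) * (1 - a) := by rw [mul_assoc]
    _ = 1 - a := by rw [hvu, one_mul]
  exact ⟨⟨1 - a, u, by rw [← hveq]; exact hvu, hu⟩, rfl⟩

theorem vec_zero_matrix {ι : Type*} [DecidableEq ι] (a : ι → R) (A : Finset ι) :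
    ∀ B : ι → ι → R, (∀ i j, B i j ∈ radM R R) →
    (∀ j ∈ A, a j = ∑ i ∈ A, a i * B i j) → ∀ j ∈ A, a j = 0 := by
  induction A using Finset.induction_on with
  | empty => intro B hB heq j hj; exact absurd hj (Finset.notMem_empty j)
  | @insert k A' hk ih =>
    intro B hB heq
    have hu : IsUnit (1 - B k k) := radR_one_sub_unit (hB k k)
    have hak : a k = (∑ i ∈ A', a i * B i k) * ↑hu.unit⁻¹ := by
      have h := heq k (Finset.mem_insert_self k A')
      rw [Finset.sum_insert hk] at h
      have h2 : a k * (1 - B k k) = ∑ i ∈ A', a i * B i k := by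
        rw [mul_sub, mul_one]
        exact sub_eq_iff_eq_add'.2 h
      have huu : (1 - B k k) * ↑hu.unit⁻¹ = 1 := hu.mul_val_inv
      calc a k = a k * ((1 - B k k) * ↑hu.unit⁻¹) := by
            rw [huu, mul_one]
      _ = (a k * (1 - B k k)) * ↑hu.unit⁻¹ := by rw [mul_assoc]
      _ = (∑ i ∈ A', a i * B i k) * ↑hu.unit⁻¹ := by rw [h2]
    set B' : ι → ι → R := fun i j => B i j + B i k * (↑hu.unit⁻¹ * B k j) with hB'def
    have hB' : ∀ i j, B' i j ∈ radM R R := by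
      intro i j
      exact add_mem (hB i j) (radR_mul_mem (hB i k) _)
    have heq' : ∀ j ∈ A', a j = ∑ i ∈ A', a i * B' i j := by
      intro j hj
      have hsum : ∑ i ∈ A', a i * B' i j
          = ∑ i ∈ A', a i * B i j + (∑ i ∈ A', a i * B i k) * (↑hu.unit⁻¹ * B k j) := by
        rw [Finset.sum_mul, ← Finset.sum_add_distrib]
        refine Finset.sum_congr rfl fun i _ => ?_
        simp only [hB'def]
        rw [mul_add, ← mul_assoc]
      have h := heq j (Finset.mem_insert_of_mem hj)
      rw [Finset.sum_insert hk] at h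
      rw [hsum, h, hak, mul_assoc]
      abel
    have hzero := ih B' hB' heq'
    intro j hj
    rcases Finset.mem_insert.1 hj with rfl | hjA
    · rw [hak, Finset.sum_congr rfl (fun i hi => by rw [hzero i hi, zero_mul]),
        Finset.sum_const_zero, zero_mul]
    · exact hzero j hjA

end AuxLemmas4

section AuxLemmas5

variable {R : Type*} [Ring R]

theorem proj_repr {S : Type*} [AddCommGroup S] [Module R S]
    (s : S →ₗ[R] S →₀ R) (hs : Function.LeftInverse (Finsupp.linearCombination R id) s)
    (x : S) : x = ∑ y ∈ (s x).support, (s x) y • y := by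
  conv_lhs => rw [← hs x]
  rw [Finsupp.linearCombination_apply, Finsupp.sum]
  simp

theorem bass_lemma {S : Type*} [AddCommGroup S] [Module R S] [hP : Module.Projective R S]
    (h : ∀ x : S, x ∈ (radM R R) • (⊤ : Submodule R S)) : ∀ x : S, x = 0 := by
  classical
  obtain ⟨s, hs⟩ := hP.out
  have hcoef : ∀ (x : S) (y : S), s x y ∈ radM R R := by
    intro x y
    refine Submodule.smul_induction_on (h x) ?_ ?_
    · intro r hr n _
      rw [map_smul, Finsupp.smul_apply, smul_eq_mul]
      exact radR_mul_mem hr _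
    · intro z w hz hw
      rw [map_add, Finsupp.add_apply]
      exact add_mem hz hw
  intro x
  set A := (s x).support with hA
  have h1 : x = ∑ i ∈ A, (s x) i • i := proj_repr s hs x
  have heq : ∀ j ∈ A, s x j = ∑ i ∈ A, s x i * s i j := by
    intro j hj
    have h2 : s x = ∑ i ∈ A, (s x) i • s i := by
      conv_lhs => rw [h1]
      rw [map_sum]
      refine Finset.sum_congr rfl fun i _ => ?_
      rw [map_smul]
    have h3 := congrArg (fun f : S →₀ R => f j) h2
    simp only [Finsupp.finset_sum_apply, Finsupp.smul_apply, smul_eq_mul] at h3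
    exact h3
  have hzero := vec_zero_matrix (fun y => s x y) A (fun y z => s y z)
    (fun i j => hcoef i j) heq
  rw [h1]
  rw [Finset.sum_congr rfl (fun i hi => show (s x) i • i = 0 by
    rw [show (s x) i = 0 from hzero i hi, zero_smul])]
  exact Finset.sum_const_zero

theorem rad_le_smul {S : Type*} [AddCommGroup S] [Module R S] [hP : Module.Projective R S] :
    radM R S ≤ (radM R R) • (⊤ : Submodule R S) := by
  classical
  obtain ⟨s, hs⟩ := hP.out
  intro x hx
  have hcoord : ∀ y : S, s x y ∈ radM R R := by
    intro y
    rw [radM, Submodule.mem_sInf]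
    intro m hm
    haveI : IsSimpleModule R (R ⧸ m) := isSimpleModule_iff_isCoatom.2 hm
    set φ : S →ₗ[R] R ⧸ m := m.mkQ.comp ((Finsupp.lapply y).comp s) with hφ
    have hφx : φ x = Submodule.Quotient.mk (s x y) := rfl
    by_cases hz : φ = 0
    · have : φ x = 0 := by rw [hz]; rfl
      rw [hφx] at this
      rwa [← Submodule.Quotient.mk_eq_zero]
    · have hsurj : Function.Surjective φ := by
        rw [← LinearMap.range_eq_top]
        rcases eq_bot_or_eq_top (LinearMap.range φ) with hb | ht
        · exfalso
          apply hz
          ext z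
          have : φ z ∈ LinearMap.range φ := LinearMap.mem_range_self φ z
          rw [hb, Submodule.mem_bot] at this
          simp [this]
        · exact ht
      have hco : IsCoatom (LinearMap.ker φ) := LinearMap.isCoatom_ker_of_surjective hsurj
      have hxk : x ∈ LinearMap.ker φ := by
        rw [radM, Submodule.mem_sInf] at hx
        exact hx _ hco
      rw [LinearMap.mem_ker, hφx] at hxk
      rwa [← Submodule.Quotient.mk_eq_zero]
  rw [proj_repr s hs x]
  exact Submodule.sum_mem _ fun y _ => Submodule.smul_mem_smul (hcoord y) Submodule.mem_top

theorem proj_coatom {S : Type*} [AddCommGroup S] [Module R S] [Module.Projective R S]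
    (hS : ∃ x : S, x ≠ 0) : ∃ W : Submodule R S, IsCoatom W := by
  by_contra hc
  push_neg at hc
  have hrad : radM R S = ⊤ := by
    rw [radM]
    have hempty : {m : Submodule R S | IsCoatom m} = ∅ := by
      rw [Set.eq_empty_iff_forall_notMem]
      exact fun m hm => hc m hm
    rw [hempty, sInf_empty]
  have hall : ∀ x : S, x ∈ (radM R R) • (⊤ : Submodule R S) := by
    intro x
    apply rad_le_smul
    rw [hrad]
    exact Submodule.mem_top
  obtain ⟨x, hx⟩ := hS
  exact hx (bass_lemma hall x)

end AuxLemmas5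

theorem stmt6 {R M : Type*} [Ring R] [AddCommGroup M] [Module R M]
    (N : Submodule R M) :
    IsDeltaSmall R N ↔ N ≤ deltaM R M ∧ IsPSD R N := by
  constructor
  · intro hδ
    refine ⟨?_, ?_⟩
    · rw [deltaM]
      refine le_sInf ?_
      rintro K ⟨hsimp, hsing⟩
      have hco : IsCoatom K := isSimpleModule_iff_isCoatom.1 hsimp
      by_contra hNK
      have hlt : K < N ⊔ K := lt_of_le_of_ne le_sup_right
        (fun hcon => hNK (le_sup_left.trans hcon.ge))
      have htop := hco.2 _ hlt
      exact hco.1 (hδ K htop hsing)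
    · intro X hX
      obtain ⟨Y, hYN, hYX, hYmax⟩ := exists_max_disjoint N X
      have hE : ∀ W : Submodule R M, W ≤ N → W ⊓ (Y ⊔ (X ⊓ N)) = ⊥ → W = ⊥ := by
        intro W hWN hWE
        have hdis2 : (Y ⊔ W) ⊓ X = ⊥ := by
          rw [eq_bot_iff]
          rintro v ⟨hv1, hv2⟩
          obtain ⟨y, hy, w, hw, rfl⟩ := Submodule.mem_sup.1 hv1
          have hwE : w ∈ W ⊓ (Y ⊔ (X ⊓ N)) := by
            refine ⟨hw, ?_⟩
            have hvN : y + w ∈ N := N.add_mem (hYN hy) (hWN hw)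
            have hxn : y + w ∈ X ⊓ N := ⟨hv2, hvN⟩
            have hweq : w = (y + w) + (-y) := by abel
            rw [hweq]
            exact Submodule.add_mem _ (Submodule.mem_sup_right hxn)
              (Submodule.mem_sup_left (Submodule.neg_mem _ hy))
          rw [hWE, Submodule.mem_bot] at hwE
          subst hwE
          rw [add_zero] at hv2 ⊢
          have : y ∈ Y ⊓ X := ⟨hy, hv2⟩
          rwa [hYX, Submodule.mem_bot] at this
        have hYW := hYmax (Y ⊔ W) (sup_le hYN hWN) hdis2 le_sup_left
        have hWY : W ≤ Y := le_trans le_sup_right hYW.le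
        rw [eq_bot_iff, ← hWE]
        exact le_inf le_rfl (le_trans hWY le_sup_left)
      have hNQ : N ⊔ (X ⊔ Y) = ⊤ := by
        rw [eq_top_iff, ← hX]
        exact sup_le le_sup_left (le_trans le_sup_left le_sup_right)
      have hQtop : X ⊔ Y = ⊤ := hδ _ hNQ (singular_quotient_of_essential
        (sup_le le_sup_right (le_trans inf_le_left le_sup_left)) hE hNQ)
      have hYXsup : Y ⊔ X = ⊤ := by rwa [sup_comm] at hQtop
      have hcompl : IsCompl Y X := ⟨disjoint_iff.2 hYX, codisjoint_iff.2 hYXsup⟩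
      have hstar : ∀ E : Submodule R ↥Y, IsSingularMod R (↥Y ⧸ E) → E = ⊤ := by
        intro E hsing
        obtain ⟨e⟩ := quot_equiv_of_compl hYX E hYXsup
        have hKs : IsSingularMod R (M ⧸ (E.map Y.subtype ⊔ X)) :=
          singular_of_equiv e.symm hsing
        have hNK : N ⊔ (E.map Y.subtype ⊔ X) = ⊤ := by
          rw [eq_top_iff, ← hX]
          exact sup_le le_sup_left (le_trans le_sup_right le_sup_right)
        have hKtop := hδ _ hNK hKs
        exact eq_top_of_le_sup hYX E (by rw [hKtop]; exact le_top)
      exact ⟨Y, hYN, projective_of_no_singular_quotient hstar, hcompl⟩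
  · rintro ⟨hNδ, hPSD⟩ X hsupX hsingX
    obtain ⟨S, hSN, hSproj, hScompl⟩ := hPSD X hsupX
    have hdisS : S ⊓ X = ⊥ := disjoint_iff.1 hScompl.1
    have hsupS : S ⊔ X = ⊤ := codisjoint_iff.1 hScompl.2
    have hSsing : IsSingularMod R ↥S :=
      singular_of_equiv (Submodule.quotientEquivOfIsCompl X S hScompl.symm) hsingX
    have hSbot : S = ⊥ := by
      by_contra hSb
      obtain ⟨x0, hx0S, hx0⟩ := (Submodule.ne_bot_iff S).1 hSb
      haveI := hSproj
      obtain ⟨W, hW⟩ := proj_coatom (R := R) (S := ↥S)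
        ⟨⟨x0, hx0S⟩, by simp [Subtype.ext_iff, hx0]⟩
      obtain ⟨e⟩ := quot_equiv_of_compl hdisS W hsupS
      haveI : IsSimpleModule R (↥S ⧸ W) := isSimpleModule_iff_isCoatom.2 hW
      have hsimple : IsSimpleModule R (M ⧸ (W.map S.subtype ⊔ X)) := IsSimpleModule.congr e
      have hsing' : IsSingularMod R (M ⧸ (W.map S.subtype ⊔ X)) :=
        singular_of_equiv e.symm (singular_quot hSsing W)
      have hδK : deltaM R M ≤ W.map S.subtype ⊔ X := sInf_le ⟨hsimple, hsing'⟩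
      have hSK : S ≤ W.map S.subtype ⊔ X := le_trans (le_trans hSN hNδ) hδK
      exact hW.1 (eq_top_of_le_sup hdisS W hSK)
    rw [hSbot] at hsupS
    rwa [bot_sup_eq] at hsupS
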